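/- Let A be a unital C*-algebra, let n ∈ ℕ, and let q : Fin n → Fin n → A be a family of projections such that ∑_{a,b} q a b = n • 1 and q a b · q a b' = 0 for every a and all b ≠ b'. Then ∑_b q a b = 1 for every a ∈ Fin n. -/
import Mathlib


/-- In a unital C*-algebra, if `q : Fin n → Fin n → A` is a family of
projections with `∑_{a,b} q a b = n • 1` and `q a b * q a b' = 0` for `b ≠ b'`,
then each row sums to `1`. -/
theorem stmt1 {A : Type*} [CStarAlgebra A] (n : ℕ)
    (q : Fin n → Fin n → A)
    (hproj : ∀ a b, star (q a b) = q a b ∧ q a b * q a b = q a b)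
    (hsum : ∑ a : Fin n, ∑ b : Fin n, q a b = n • (1 : A))
    (horth : ∀ (a : Fin n) (b b' : Fin n), b ≠ b' → q a b * q a b' = 0) :
    ∀ a : Fin n, ∑ b : Fin n, q a b = 1 := by
  letI : PartialOrder A := CStarAlgebra.spectralOrder A
  letI : StarOrderedRing A := CStarAlgebra.spectralOrderedRing A
  set p : Fin n → A := fun a => ∑ b, q a b with hp
  have hpstar : ∀ a, star (p a) = p a := by
    intro a
    simp only [hp, star_sum]
    exact Finset.sum_congr rfl fun b _ => (hproj a b).1
  have hpidem : ∀ a, p a * p a = p a := by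
    intro a
    simp only [hp]
    rw [Finset.sum_mul_sum]
    rw [Finset.sum_congr rfl fun b (_ : b ∈ Finset.univ) => ?_]
    · rw [Finset.sum_eq_single b]
      · exact (hproj a b).2
      · intro b' _ hb'; exact horth a b b' (Ne.symm hb')
      · intro h; exact absurd (Finset.mem_univ b) h
  have hcompl : ∀ a, (0 : A) ≤ 1 - p a := by
    intro a
    have h1 : star (1 - p a) * (1 - p a) = 1 - p a := by
      rw [star_sub, star_one, hpstar, sub_mul, mul_sub, mul_sub, one_mul, mul_one,
        hpidem]
      simp
    rw [← h1]
    exact star_mul_self_nonneg _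
  have hsum0 : ∑ a : Fin n, (1 - p a) = 0 := by
    rw [Finset.sum_sub_distrib, hsum]
    simp
  intro a
  have hle : (1 - p a) ≤ ∑ a' : Fin n, (1 - p a') :=
    Finset.single_le_sum (fun a' _ => hcompl a') (Finset.mem_univ a)
  rw [hsum0] at hle
  have h0 : (1 - p a) = 0 := le_antisymm hle (hcompl a)
  have := sub_eq_zero.mp h0
  simpa [hp] using this.symm
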